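/- Fix k ≥ 1 and constants α_k ∈ ℝ. Let S, T : [0,∞) → L(H) be semigroup families with T(s) contractions commuting with the closed operator G^k on D(G^k), and ‖G^k S(t)φ‖ ≤ e^{α_k t}‖G^k φ‖ for φ ∈ D(G^k). If for some t ≥ 0 the Trotter products (S(t/n) T(t/n))^n φ converge strongly in H to P(t)φ for every φ ∈ H, then P(t) maps D(G^k) into D(G^k) and ‖G^k P(t) φ‖ ≤ e^{α_k t} ‖G^k φ‖ for all φ ∈ D(G^k). -/

import Mathlib

open Filter Topology

set_option maxHeartbeats 1000000 in
/-- Trotter limits preserve the `G^k`-estimate: if `‖G^k S(t)φ‖ ≤ e^{α_k t}‖G^k φ‖` on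
`D(G^k)`, each `T(s)` is a contraction commuting with `G^k` on `D(G^k)`, `G^k` is closed, and
the Trotter products `(S(t/n) T(t/n))^n φ` converge strongly to `P(t)φ` for every `φ`, then
`P(t)` maps `D(G^k)` into `D(G^k)` with `‖G^k P(t)φ‖ ≤ e^{α_k t}‖G^k φ‖`. -/
theorem stmt19 {H : Type*} [NormedAddCommGroup H] [InnerProductSpace ℝ H] [CompleteSpace H]
    (D : Submodule ℝ H) (G : H → H) (k : ℕ) (hk : 1 ≤ k) (αk : ℝ)
    (hadd : ∀ x ∈ D, ∀ y ∈ D, G (x + y) = G x + G y)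
    (hsmul : ∀ (c : ℝ), ∀ x ∈ D, G (c • x) = c • G x)
    -- closedness of `G^k` (with domain `D(G^k) = {x | G^[i] x ∈ D(G) for i < k}`)
    (hGkclosed : ∀ (u : ℕ → H) (x y : H), (∀ n, ∀ i < k, G^[i] (u n) ∈ D) →
      Tendsto u atTop (𝓝 x) → Tendsto (fun n => G^[k] (u n)) atTop (𝓝 y) →
      (∀ i < k, G^[i] x ∈ D) ∧ G^[k] x = y)
    (S T : ℝ → H →L[ℝ] H) (t : ℝ) (ht : 0 ≤ t)
    (hSmap : ∀ s ≥ (0:ℝ), ∀ φ : H, (∀ i < k, G^[i] φ ∈ D) →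
      (∀ i < k, G^[i] (S s φ) ∈ D) ∧ ‖G^[k] (S s φ)‖ ≤ Real.exp (αk * s) * ‖G^[k] φ‖)
    (hTcontr : ∀ s ≥ (0:ℝ), ∀ ψ : H, ‖T s ψ‖ ≤ ‖ψ‖)
    (hTmap : ∀ s ≥ (0:ℝ), ∀ φ : H, (∀ i < k, G^[i] φ ∈ D) →
      (∀ i < k, G^[i] (T s φ) ∈ D) ∧ G^[k] (T s φ) = T s (G^[k] φ))
    (Pt : H → H)
    (hconv : ∀ φ : H, Tendsto (fun n : ℕ => (fun ψ => S (t / n) (T (t / n) ψ))^[n] φ)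
      atTop (𝓝 (Pt φ))) :
    ∀ φ : H, (∀ i < k, G^[i] φ ∈ D) →
      (∀ i < k, G^[i] (Pt φ) ∈ D) ∧ ‖G^[k] (Pt φ)‖ ≤ Real.exp (αk * t) * ‖G^[k] φ‖ := by
  -- `G 0 = 0`
  have hG0 : G 0 = 0 := by
    have h := hsmul 0 0 D.zero_mem
    simpa using h
  have hiter0 : ∀ i, G^[i] (0 : H) = 0 := by
    intro i
    induction i with
    | zero => rfl
    | succ i ih => rw [Function.iterate_succ_apply', ih, hG0]
  -- additivity of the iterates on the domain
  have lemA : ∀ i, i ≤ k → ∀ x, (∀ j < k, G^[j] x ∈ D) → ∀ y, (∀ j < k, G^[j] y ∈ D) →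
      G^[i] (x + y) = G^[i] x + G^[i] y := by
    intro i
    induction i with
    | zero => intro _ x _ y _; simp
    | succ i ih =>
      intro hi x hx y hy
      have hik : i < k := Nat.lt_of_succ_le hi
      rw [Function.iterate_succ_apply', Function.iterate_succ_apply',
        Function.iterate_succ_apply', ih (Nat.le_of_lt hik) x hx y hy,
        hadd _ (hx i hik) _ (hy i hik)]
  -- homogeneity of the iterates on the domain
  have lemS : ∀ i, i ≤ k → ∀ (c : ℝ), ∀ x, (∀ j < k, G^[j] x ∈ D) →
      G^[i] (c • x) = c • G^[i] x := by
    intro i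
    induction i with
    | zero => intro _ c x _; simp
    | succ i ih =>
      intro hi c x hx
      have hik : i < k := Nat.lt_of_succ_le hi
      rw [Function.iterate_succ_apply', Function.iterate_succ_apply',
        ih (Nat.le_of_lt hik) c x hx, hsmul _ _ (hx i hik)]
  -- the graph of `G^[k]` on its domain, as a submodule of `H × H`
  let Gr : Submodule ℝ (H × H) :=
    { carrier := {p | ∃ x : H, (∀ i < k, G^[i] x ∈ D) ∧ p = (x, G^[k] x)}
      add_mem' := by
        rintro p q ⟨x, hx, rfl⟩ ⟨y, hy, rfl⟩
        refine ⟨x + y, fun i hik => ?_, ?_⟩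
        · rw [lemA i (Nat.le_of_lt hik) x hx y hy]
          exact D.add_mem (hx i hik) (hy i hik)
        · rw [lemA k le_rfl x hx y hy]; rfl
      zero_mem' := ⟨0, fun i _ => by rw [hiter0]; exact D.zero_mem, by simp [hiter0]; rfl⟩
      smul_mem' := by
        rintro c p ⟨x, hx, rfl⟩
        refine ⟨c • x, fun i hik => ?_, ?_⟩
        · rw [lemS i (Nat.le_of_lt hik) c x hx]
          exact D.smul_mem c (hx i hik)
        · rw [lemS k le_rfl c x hx]; rfl }
  -- iteration bound
  have key : ∀ n : ℕ, ∀ s, 0 ≤ s → ∀ ψ : H, (∀ i < k, G^[i] ψ ∈ D) →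
      (∀ i < k, G^[i] ((fun χ => S s (T s χ))^[n] ψ) ∈ D) ∧
      ‖G^[k] ((fun χ => S s (T s χ))^[n] ψ)‖ ≤ (Real.exp (αk * s)) ^ n * ‖G^[k] ψ‖ := by
    intro n
    induction n with
    | zero => intro s hs ψ hψ; exact ⟨hψ, by simp⟩
    | succ n ih =>
      intro s hs ψ hψ
      obtain ⟨hdom, hbd⟩ := ih s hs ψ hψ
      set χ := (fun χ => S s (T s χ))^[n] ψ with hχ
      obtain ⟨hTd, hTe⟩ := hTmap s hs χ hdom
      obtain ⟨hSd, hSe⟩ := hSmap s hs (T s χ) hTd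
      rw [Function.iterate_succ_apply']
      refine ⟨hSd, ?_⟩
      calc ‖G^[k] (S s (T s χ))‖ ≤ Real.exp (αk * s) * ‖G^[k] (T s χ)‖ := hSe
        _ ≤ Real.exp (αk * s) * ‖G^[k] χ‖ := by
            rw [hTe]
            exact mul_le_mul_of_nonneg_left (hTcontr s hs _) (Real.exp_pos _).le
        _ ≤ Real.exp (αk * s) * ((Real.exp (αk * s)) ^ n * ‖G^[k] ψ‖) :=
            mul_le_mul_of_nonneg_left hbd (Real.exp_pos _).le
        _ = (Real.exp (αk * s)) ^ (n + 1) * ‖G^[k] ψ‖ := by ring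
  intro φ hφ
  set C := Real.exp (αk * t) * ‖G^[k] φ‖ with hCdef
  set u : ℕ → H :=
    fun n => (fun ψ => S (t / ((n + 1 : ℕ) : ℝ)) (T (t / ((n + 1 : ℕ) : ℝ)) ψ))^[n + 1] φ
    with hudef
  have hucv : Tendsto u atTop (𝓝 (Pt φ)) := (hconv φ).comp (tendsto_add_atTop_nat 1)
  have hsnn : ∀ n : ℕ, (0 : ℝ) ≤ t / ((n + 1 : ℕ) : ℝ) := by
    intro n; positivity
  have hudom : ∀ n, ∀ i < k, G^[i] (u n) ∈ D := fun n =>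
    (key (n + 1) _ (hsnn n) φ hφ).1
  have hubd : ∀ n, ‖G^[k] (u n)‖ ≤ C := by
    intro n
    have h := (key (n + 1) _ (hsnn n) φ hφ).2
    have hexp : (Real.exp (αk * (t / ((n + 1 : ℕ) : ℝ)))) ^ (n + 1) = Real.exp (αk * t) := by
      rw [← Real.exp_nat_mul]
      congr 1
      have hne : ((n + 1 : ℕ) : ℝ) ≠ 0 := by positivity
      field_simp
    rw [hexp] at h
    exact h
  have hC0 : 0 ≤ C := mul_nonneg (Real.exp_pos _).le (norm_nonneg _)
  -- weak-* cluster point of `G^[k] (u n)` via Banach–Alaoglu and Riesz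
  let Fn : ℕ → WeakDual ℝ H := fun n =>
    StrongDual.toWeakDual (InnerProductSpace.toDual ℝ H (G^[k] (u n)))
  have hFnmem : ∀ n, Fn n ∈ WeakDual.toStrongDual ⁻¹' Metric.closedBall 0 C := by
    intro n
    simp only [Set.mem_preimage, mem_closedBall_zero_iff]
    have : ‖WeakDual.toStrongDual (Fn n)‖ = ‖G^[k] (u n)‖ := by
      show ‖InnerProductSpace.toDual ℝ H (G^[k] (u n))‖ = _
      exact (InnerProductSpace.toDual ℝ H).norm_map _
    rw [this]
    exact hubd n
  haveI : (Filter.map Fn atTop).NeBot := Filter.map_neBot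
  obtain ⟨F, hFmem, hFcl⟩ := (WeakDual.isCompact_closedBall (𝕜 := ℝ) (E := H) 0 C).exists_clusterPt
    (f := Filter.map Fn atTop)
    (le_principal_iff.mpr (Filter.mem_map.mpr (Filter.Eventually.of_forall hFnmem)))
  set y : H := (InnerProductSpace.toDual ℝ H).symm (WeakDual.toStrongDual F) with hydef
  have hybd : ‖y‖ ≤ C := by
    have : ‖y‖ = ‖WeakDual.toStrongDual F‖ := (InnerProductSpace.toDual ℝ H).symm.norm_map _
    rw [this]
    exact mem_closedBall_zero_iff.mp hFmem
  -- `(Pt φ, y)` lies in the closure of the graph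
  have hmemK : ((Pt φ, y) : H × H) ∈ Gr.topologicalClosure := by
    by_contra hxy
    obtain ⟨f, c, hfc, hcf⟩ := geometric_hahn_banach_closed_point
      (Gr.topologicalClosure.convex) (Submodule.isClosed_topologicalClosure Gr) hxy
    have hc0 : (0 : ℝ) < c := by
      have := hfc 0 (Submodule.zero_mem _)
      simpa using this
    have hf0 : ∀ a ∈ Gr.topologicalClosure, f a = 0 := by
      intro a ha
      by_contra h0
      have hmem : ((c / f a) • a) ∈ Gr.topologicalClosure := Submodule.smul_mem _ _ ha
      have hlt := hfc _ hmem
      rw [map_smul, smul_eq_mul, div_mul_cancel₀ _ h0] at hlt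
      exact lt_irrefl c hlt
    set g : H →L[ℝ] ℝ := f.comp (ContinuousLinearMap.inl ℝ H H) with hgdef
    set h : H →L[ℝ] ℝ := f.comp (ContinuousLinearMap.inr ℝ H H) with hhdef
    have hsplit : ∀ a b : H, f (a, b) = g a + h b := by
      intro a b
      have hab : ((a, b) : H × H) = ((a, 0) : H × H) + ((0, b) : H × H) := by simp
      rw [hab, map_add]; rfl
    set z : H := (InnerProductSpace.toDual ℝ H).symm h with hzdef
    have hz : ∀ w : H, h w = inner ℝ w z := by
      intro w
      have := InnerProductSpace.toDual_symm_apply (𝕜 := ℝ) (E := H) (x := w) (y := h)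
      rw [← this, ← hzdef, real_inner_comm]
    have hFnz : ∀ n, Fn n z = inner ℝ (G^[k] (u n)) z := by
      intro n
      exact InnerProductSpace.toDual_apply_apply
    have hFz : F z = inner ℝ y z := by
      have h1 : WeakDual.toStrongDual F = InnerProductSpace.toDual ℝ H y := by
        rw [hydef, LinearIsometryEquiv.apply_symm_apply]
      have h2 : F z = WeakDual.toStrongDual F z := rfl
      rw [h2, h1, InnerProductSpace.toDual_apply_apply]
    have hzero : ∀ n, g (u n) + (inner ℝ (G^[k] (u n)) z : ℝ) = 0 := by
      intro n
      have hmem : ((u n, G^[k] (u n)) : H × H) ∈ Gr := ⟨u n, hudom n, rfl⟩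
      have h0 := hf0 _ (Gr.le_topologicalClosure hmem)
      rw [hsplit, hz] at h0
      exact h0
    have hg : Tendsto (fun n => g (u n)) atTop (𝓝 (g (Pt φ))) :=
      (g.continuous.tendsto _).comp hucv
    have hev : MapClusterPt (F z) atTop (fun n => Fn n z) := by
      have : MapClusterPt F atTop Fn := hFcl
      exact this.continuousAt_comp (WeakDual.eval_continuous z).continuousAt
    have hkey : g (Pt φ) + F z = 0 := by
      by_contra hne
      set ε := |g (Pt φ) + F z| with hεdef
      have hε : 0 < ε := abs_pos.mpr hne
      have h1 : ∀ᶠ n in atTop, |g (u n) - g (Pt φ)| < ε / 2 := by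
        have := hg (Metric.ball_mem_nhds (g (Pt φ)) (half_pos hε))
        filter_upwards [this] with n hn
        simp only [Set.mem_preimage, Metric.mem_ball, Real.dist_eq] at hn
        exact hn
      have h2 : ∃ᶠ n in atTop, |Fn n z - F z| < ε / 2 := by
        have := mapClusterPt_iff_frequently.mp hev (Metric.ball (F z) (ε / 2))
          (Metric.ball_mem_nhds _ (half_pos hε))
        apply this.mono
        intro n hn
        rw [Metric.mem_ball, Real.dist_eq] at hn
        exact hn
      obtain ⟨n, hn2, hn1⟩ := (h2.and_eventually h1).exists
      have heqn : g (Pt φ) + F z =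
          (g (Pt φ) - g (u n)) + (F z - Fn n z) := by
        have := hzero n
        rw [← hFnz n] at this
        linarith
      have : ε < ε := by
        calc ε = |g (Pt φ) + F z| := rfl
          _ = |(g (Pt φ) - g (u n)) + (F z - Fn n z)| := by rw [heqn]
          _ ≤ |g (Pt φ) - g (u n)| + |F z - Fn n z| := abs_add_le _ _
          _ < ε / 2 + ε / 2 := by
              rw [abs_sub_comm (g (Pt φ)), abs_sub_comm (F z)]
              exact add_lt_add hn1 hn2
          _ = ε := by ring
      exact lt_irrefl _ this
    have hfxy : f (Pt φ, y) = 0 := by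
      rw [hsplit, hz, ← hFz]
      exact hkey
    rw [hfxy] at hcf
    exact absurd (hc0.trans hcf) (lt_irrefl 0)
  -- extract a strongly convergent sequence from the closure and apply closedness
  have hclos : ((Pt φ, y) : H × H) ∈ closure (Gr : Set (H × H)) := by
    rw [← Submodule.topologicalClosure_coe]
    exact hmemK
  obtain ⟨v, hvmem, hvlim⟩ := mem_closure_iff_seq_limit.mp hclos
  choose x hxdom hxeq using hvmem
  have hfst : (fun m => (v m).1) = x := funext fun m => by rw [hxeq m]
  have hsnd : (fun m => (v m).2) = fun m => G^[k] (x m) := funext fun m => by rw [hxeq m]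
  have hx1 : Tendsto x atTop (𝓝 (Pt φ)) := by
    have := (continuous_fst.tendsto _).comp hvlim
    rwa [show (Prod.fst ∘ v) = x from hfst] at this
  have hx2 : Tendsto (fun m => G^[k] (x m)) atTop (𝓝 y) := by
    have := (continuous_snd.tendsto _).comp hvlim
    rwa [show (Prod.snd ∘ v) = fun m => G^[k] (x m) from hsnd] at this
  obtain ⟨hdomP, heqP⟩ := hGkclosed x (Pt φ) y hxdom hx1 hx2
  exact ⟨hdomP, by rw [heqP]; exact hybd⟩
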